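/- Let d > 1. The subgroups of C∞ × C_d that are infinite cyclic of index d are exactly the d subgroups generated by t·s^r for 0 ≤ r < d, where t generates C∞ and s generates C_d. Moreover, the automorphism group Aut(C∞ × C_d) acts transitively on this set of subgroups; in particular none of these subgroups is characteristic when d > 1. -/

import Mathlib

/-- The shear automorphism `(x, y) ↦ (x, y + x • c)` of `ℤ × ZMod d`. -/
def stmt10Shear (d : ℕ) (c : ZMod d) : AddAut (ℤ × ZMod d) where
  toFun p := (p.1, p.2 + p.1 • c)
  invFun p := (p.1, p.2 - p.1 • c)
  left_inv p := by simp
  right_inv p := by simp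
  map_add' p q := by
    ext
    · simp
    · simp [add_zsmul]; ring

theorem stmt10_shear_map (d : ℕ) (c r : ZMod d) :
    AddSubgroup.map (stmt10Shear d c).toAddMonoidHom (AddSubgroup.zmultiples ((1 : ℤ), r)) =
      AddSubgroup.zmultiples ((1 : ℤ), r + c) := by
  rw [AddMonoidHom.map_zmultiples]
  simp [stmt10Shear]

theorem stmt10_distinct (d : ℕ) (r r' : ZMod d)
    (h : AddSubgroup.zmultiples ((1 : ℤ), r) = AddSubgroup.zmultiples ((1 : ℤ), r')) :
    r = r' := by
  have h1 : ((1 : ℤ), r') ∈ AddSubgroup.zmultiples ((1 : ℤ), r) := by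
    rw [h]; exact AddSubgroup.mem_zmultiples _
  obtain ⟨n, hn⟩ := h1
  have h2 : n • (1 : ℤ) = 1 := congrArg Prod.fst hn
  have h3 : n = 1 := by simpa using h2
  have h4 : n • r = r' := congrArg Prod.snd hn
  simpa [h3] using h4

theorem stmt10_index (d : ℕ) (hd : 1 < d) (r : ZMod d) :
    (AddSubgroup.zmultiples ((1 : ℤ), r)).index = d := by
  have : NeZero d := ⟨by omega⟩
  let f : ℤ × ZMod d →+ ZMod d :=
    { toFun := fun p => p.2 - p.1 • r
      map_zero' := by simp
      map_add' := fun p q => by simp [add_zsmul]; ring }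
  have hker : f.ker = AddSubgroup.zmultiples ((1 : ℤ), r) := by
    ext ⟨x, y⟩
    simp only [AddMonoidHom.mem_ker, AddSubgroup.mem_zmultiples_iff]
    constructor
    · intro h
      exact ⟨x, by ext <;> simp_all [f, sub_eq_zero]⟩
    · rintro ⟨n, hn⟩
      have h1 : n • (1 : ℤ) = x := congrArg Prod.fst hn
      have h2 : n • r = y := congrArg Prod.snd hn
      have h1' : n = x := by simpa using h1
      simp [f, ← h2, ← h1', sub_eq_zero]
  have hsurj : Function.Surjective f := fun y => ⟨(0, y), by simp [f]⟩
  rw [← hker, AddSubgroup.index_ker]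
  rw [AddMonoidHom.range_eq_top.mpr hsurj]
  rw [Nat.card_congr AddSubgroup.topEquiv.toEquiv, Nat.card_zmod]

theorem stmt10_forward (d : ℕ) (hd : 1 < d) (a : ℤ) (b : ZMod d)
    (hg : ¬ IsOfFinAddOrder ((a, b) : ℤ × ZMod d))
    (hidx : (AddSubgroup.zmultiples ((a : ℤ), b)).index = d) :
    ∃ r : ZMod d, AddSubgroup.zmultiples ((a : ℤ), b) = AddSubgroup.zmultiples ((1 : ℤ), r) := by
  have : NeZero d := ⟨by omega⟩
  have ha : a ≠ 0 := by
    rintro rfl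
    refine hg (isOfFinAddOrder_iff_nsmul_eq_zero.mpr ⟨d, by omega, ?_⟩)
    ext
    · simp
    · simp [nsmul_eq_mul, ZMod.natCast_self]
  set Z := AddSubgroup.zmultiples ((a : ℤ), b) with hZ
  set K := AddSubgroup.comap (AddMonoidHom.fst ℤ (ZMod d)) (AddSubgroup.zmultiples a) with hK
  have hZK : Z ≤ K := by
    rintro _ ⟨n, rfl⟩
    exact ⟨n, rfl⟩
  have hKidx : K.index = a.natAbs := by
    rw [hK, AddSubgroup.index_comap_of_surjective _ (fun x => ⟨(x, 0), rfl⟩),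
      Int.index_zmultiples]
  have hmul : Z.relIndex K * a.natAbs = d := by
    rw [← hKidx, AddSubgroup.relIndex_mul_index hZK, hidx]
  have hfin : Finite (K ⧸ Z.addSubgroupOf K) := by
    have hne : Z.relIndex K ≠ 0 := by
      intro h; rw [h, zero_mul] at hmul; omega
    exact (Nat.card_ne_zero.mp hne).2
  have hmem : ∀ y : ZMod d, ((0 : ℤ), y) ∈ K :=
    fun y => AddSubgroup.mem_comap.mpr (zero_mem _)
  have hinj : Function.Injective
      (fun y : ZMod d => (QuotientAddGroup.mk ⟨((0 : ℤ), y), hmem y⟩ : K ⧸ Z.addSubgroupOf K)) := by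
    intro y y' h
    rw [QuotientAddGroup.eq] at h
    obtain ⟨n, hn⟩ := h
    have h1 : n • a = 0 := congrArg Prod.fst hn
    have h2 : n = 0 := by
      rcases (by simpa using h1 : n = 0 ∨ a = 0) with h | h
      · exact h
      · exact absurd h ha
    have h3 : n • b = -y + y' := congrArg Prod.snd hn
    rw [h2, zero_zsmul] at h3
    exact neg_add_eq_zero.mp h3.symm
  have hge : d ≤ Z.relIndex K := by
    have := Nat.card_le_card_of_injective _ hinj
    simpa [Nat.card_zmod, AddSubgroup.relIndex, AddSubgroup.index] using this
  have hna : a.natAbs = 1 := by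
    have h1 : 1 ≤ a.natAbs := Int.natAbs_pos.mpr ha
    nlinarith [hmul, hge]
  rcases Int.natAbs_eq_iff.mp hna with h | h
  · refine ⟨b, ?_⟩
    have he : ((a : ℤ), b) = ((1 : ℤ), b) := by simp [h, Prod.ext_iff]
    rw [hZ, he]
  · refine ⟨-b, ?_⟩
    have he : ((a : ℤ), b) = -((1 : ℤ), -b) := by simp [h, Prod.ext_iff]
    rw [hZ, he, AddSubgroup.zmultiples_neg]

/-- The infinite cyclic subgroups of index `d` in `C∞ × C_d = ℤ × ℤ/d` are
exactly the `d` distinct subgroups generated by `t·s^r = (1, r)`, and `Aut(ℤ × ℤ/d)` acts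
transitively on them; in particular none is characteristic when `d > 1`. -/
theorem stmt_10 (d : ℕ) (hd : 1 < d) :
    -- characterization of the infinite cyclic subgroups of index d
    (∀ Z : AddSubgroup (ℤ × ZMod d),
      ((∃ g : ℤ × ZMod d, ¬ IsOfFinAddOrder g ∧ Z = AddSubgroup.zmultiples g) ∧
        Z.index = d) ↔ ∃ r : ZMod d, Z = AddSubgroup.zmultiples ((1 : ℤ), r)) ∧
    -- they are d distinct subgroups
    (∀ r r' : ZMod d,
      AddSubgroup.zmultiples ((1 : ℤ), r) = AddSubgroup.zmultiples ((1 : ℤ), r') → r = r') ∧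
    -- Aut acts transitively on them
    (∀ r r' : ZMod d, ∃ ψ : AddAut (ℤ × ZMod d),
      AddSubgroup.map ψ.toAddMonoidHom (AddSubgroup.zmultiples ((1 : ℤ), r)) =
        AddSubgroup.zmultiples ((1 : ℤ), r')) ∧
    -- none of them is characteristic
    (∀ r : ZMod d, ∃ ψ : AddAut (ℤ × ZMod d),
      AddSubgroup.map ψ.toAddMonoidHom (AddSubgroup.zmultiples ((1 : ℤ), r)) ≠
        AddSubgroup.zmultiples ((1 : ℤ), r)) := by
  haveI : Fact (1 < d) := ⟨hd⟩
  refine ⟨?_, fun r r' => stmt10_distinct d r r', ?_, ?_⟩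
  · intro Z
    constructor
    · rintro ⟨⟨⟨a, b⟩, hg, rfl⟩, hidx⟩
      exact stmt10_forward d hd a b hg hidx
    · rintro ⟨r, rfl⟩
      refine ⟨⟨((1 : ℤ), r), ?_, rfl⟩, stmt10_index d hd r⟩
      intro h
      obtain ⟨n, hn, h0⟩ := isOfFinAddOrder_iff_nsmul_eq_zero.mp h
      have : n • (1 : ℤ) = 0 := congrArg Prod.fst h0
      simp at this
      omega
  · intro r r'
    exact ⟨stmt10Shear d (r' - r), by rw [stmt10_shear_map]; ring_nf⟩
  · intro r
    refine ⟨stmt10Shear d 1, ?_⟩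
    rw [stmt10_shear_map]
    intro h
    have := stmt10_distinct d (r + 1) r h
    simpa using this
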